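/- Let t be an odd prime, k an integer, and 1 ≤ j ≤ t-1. For the vector n⃗ ∈ ℤ^t with components n_i = -k·δ_{i,j-1} + k·δ_{i,j}, the quantity (t/2)·(n⃗·n⃗) + b⃗_t·n⃗ equals tk² + k, where b⃗_t = (0,1,...,t-1). Consequently, a partition with GBG-rank mod t equal to k·ω_t^j has t-core of size tk² + k. -/

import Mathlib

open Finset PowerSeries

/-- Number of cells of the Young diagram with (column - row) ≡ i (mod t). -/
def rCount (μ : YoungDiagram) (t : ℕ) (i : ZMod t) : ℕ :=
  (μ.cells.filter (fun c => ((c.2 : ZMod t) - (c.1 : ZMod t) = i))).card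

/-- GBG-rank of a partition mod t: Σ_{i<t} r_i ω_t^i where ω_t = e^{2πi/t}. -/
noncomputable def GBG (μ : YoungDiagram) (t : ℕ) : ℂ :=
  ∑ i ∈ Finset.range t, (rCount μ t (i : ZMod t) : ℂ) *
    Complex.exp (2 * (Real.pi : ℂ) * Complex.I * (i : ℂ) / (t : ℂ))

/-- Generating function (formal power series in q) counting Young diagrams of each size
satisfying the predicate P. -/
noncomputable def GF (P : YoungDiagram → Prop) : PowerSeries ℚ :=
  PowerSeries.mk fun n => (Nat.card {μ : YoungDiagram // μ.cells.card = n ∧ P μ} : ℚ)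

/-- (q^s; q^s)_L  = ∏_{j=0}^{L-1} (1 - q^{s(j+1)}). -/
noncomputable def qp (s L : ℕ) : PowerSeries ℚ :=
  ∏ j ∈ Finset.range L, (1 - (PowerSeries.X : PowerSeries ℚ) ^ (s * (j + 1)))

/-- 1/(q^s;q^s)_L with the convention that it is 0 for L < 0. -/
noncomputable def qpi (s : ℕ) (L : ℤ) : PowerSeries ℚ :=
  if 0 ≤ L then (qp s L.toNat)⁻¹ else 0

/-- Gaussian binomial coefficient [m choose n] in the variable q^s,
equal to 0 unless m ≥ n ≥ 0. -/
noncomputable def gbinom (s : ℕ) (m n : ℤ) : PowerSeries ℚ :=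
  if 0 ≤ n ∧ n ≤ m then qp s m.toNat * (qp s n.toNat)⁻¹ * (qp s (m - n).toNat)⁻¹ else 0

/-- (-q^s; q^{2s})_L = ∏_{j=0}^{L-1}(1 + q^{s(2j+1)}), with value 0 convention not needed
but defined as 0 for L < 0. -/
noncomputable def aqp (s : ℕ) (L : ℤ) : PowerSeries ℚ :=
  if 0 ≤ L then
    ∏ j ∈ Finset.range L.toNat, (1 + (PowerSeries.X : PowerSeries ℚ) ^ (s * (2 * j + 1)))
  else 0

/-- Multiplicity of the part m in the partition given by a Young diagram. -/
def mult (μ : YoungDiagram) (m : ℕ) : ℕ :=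
  ((Finset.range (μ.colLen 0)).filter (fun j => μ.rowLen j = m)).card

/-- The Maya diagram / beta-set of a partition: the set {λ_j - j : j ≥ 1} ⊆ ℤ. -/
def InS (μ : YoungDiagram) (x : ℤ) : Prop :=
  ∃ j : ℕ, (μ.rowLen j : ℤ) - (j + 1) = x

/-- `g` is the i-th component of the t-quotient of μ (Littlewood decomposition):
the Maya diagram of g is the i-th slice mod t of the Maya diagram of μ. -/
def QuotComp (t : ℕ) (i : ℕ) (μ g : YoungDiagram) : Prop :=
  ∀ m : ℤ, InS μ (t * m + i) ↔ InS g m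

/-- μ is a t-core: its Young diagram has no rim hooks of length t, equivalently
its Maya diagram is closed under subtracting t. -/
def IsTCore (t : ℕ) (μ : YoungDiagram) : Prop :=
  ∀ x : ℤ, InS μ x → InS μ (x - t)

/-- i-th component of the vector n⃗(μ,t):  r_i - r_{i+1} (indices mod t). -/
def nVec (μ : YoungDiagram) (t : ℕ) (i : ℕ) : ℤ :=
  (rCount μ t (i : ZMod t) : ℤ) - (rCount μ t ((i + 1 : ℕ) : ZMod t) : ℤ)

/-- `h` is the t-core of μ: h is a t-core with the same vector n⃗ as μ. -/
def TCoreOf (t : ℕ) (μ h : YoungDiagram) : Prop :=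
  IsTCore t h ∧ ∀ i : ℕ, i < t → nVec h t i = nVec μ t i

set_option linter.unusedSectionVars false
set_option linter.unusedTactic false

namespace TCA

def ind (t : ℕ) (i : ZMod t) (x : ℤ) : ℤ := if (x : ZMod t) = i then 1 else 0

noncomputable def zc (t : ℕ) (a b : ℤ) (i : ZMod t) : ℤ := ∑ v ∈ Finset.Ico a b, ind t i v

lemma Ico_succ (a b : ℤ) (hab : a ≤ b) : Finset.Ico a (b+1) = insert b (Finset.Ico a b) := by
  ext v; simp only [Finset.mem_Ico, Finset.mem_insert]; omega

lemma zc_succ (t : ℕ) (a b : ℤ) (i : ZMod t) (hab : a ≤ b) :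
    zc t a (b+1) i = zc t a b i + ind t i b := by
  rw [zc, Ico_succ a b hab, Finset.sum_insert (by simp), zc, add_comm]

lemma zc_split (t : ℕ) (a b c : ℤ) (i : ZMod t) (hab : a ≤ b) (hbc : b ≤ c) :
    zc t a c i = zc t a b i + zc t b c i := by
  rw [zc, zc, zc, ← Finset.sum_union (Finset.Ico_disjoint_Ico_consecutive a b c),
    Finset.Ico_union_Ico_eq_Ico hab hbc]

lemma ind_pred (t : ℕ) (i : ZMod t) (x : ℤ) : ind t (i+1) x = ind t i (x - 1) := by
  unfold ind
  have h : ((x : ZMod t) = i + 1) ↔ ((x - 1 : ℤ) : ZMod t) = i := by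
    push_cast
    constructor
    · intro hh; rw [hh]; ring
    · intro hh; rw [← hh]; ring
  simp only [h]

lemma zc_diff (t : ℕ) (a : ℤ) (n : ℕ) (i : ZMod t) :
    zc t a (a + n) i - zc t a (a + n) (i + 1) = ind t i (a + n - 1) - ind t i (a - 1) := by
  induction n with
  | zero => simp [zc]
  | succ n ih =>
      have hab : a ≤ a + n := by omega
      have h1 : (a : ℤ) + (n + 1 : ℕ) = (a + n) + 1 := by push_cast; ring
      rw [h1, zc_succ t a (a+n) i hab, zc_succ t a (a+n) (i+1) hab,
        ind_pred t i (a + n)]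
      have h2 : (a : ℤ) + n - 1 = a + n - 1 := by ring
      rw [h2] at ih ⊢
      have h3 : a + (n:ℤ) + 1 - 1 = a + n := by ring
      rw [h3]
      linarith [ih]

lemma zc_diff' (t : ℕ) (a b : ℤ) (i : ZMod t) (hab : a ≤ b) :
    zc t a b i - zc t a b (i + 1) = ind t i (b - 1) - ind t i (a - 1) := by
  have : b = a + ((b - a).toNat : ℤ) := by omega
  rw [this]; exact zc_diff t a _ i

lemma zc_period (t : ℕ) (htpos : 0 < t) (a : ℤ) (i : ZMod t) : zc t a (a + t) i = 1 := by
  have hinj : ∀ v ∈ Finset.Ico a (a + (t:ℤ)), ∀ w ∈ Finset.Ico a (a + (t:ℤ)),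
      ((v : ZMod t) = (w : ZMod t)) → v = w := by
    intro v hv w hw hvw
    simp only [Finset.mem_Ico] at hv hw
    have : ((v - w : ℤ) : ZMod t) = 0 := by push_cast; rw [hvw]; ring
    rw [ZMod.intCast_zmod_eq_zero_iff_dvd] at this
    obtain ⟨c, hc⟩ := this
    have h1 : -(t:ℤ) < v - w := by omega
    have h2 : v - w < t := by omega
    have hc0 : c = 0 := by nlinarith [hc]
    rw [hc0, mul_zero] at hc
    omega
  -- existence
  haveI : NeZero t := ⟨htpos.ne'⟩
  set v0 : ℤ := a + ((i - (a : ZMod t)).val : ℤ) with hv0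
  have hv0mem : v0 ∈ Finset.Ico a (a + (t:ℤ)) := by
    simp only [Finset.mem_Ico, hv0]
    have := ZMod.val_lt (i - (a : ZMod t))
    omega
  have hv0res : ((v0 : ZMod t) : ZMod t) = i := by
    have : ((v0 : ℤ) : ZMod t) = (a : ZMod t) + ((i - (a:ZMod t)).val : ℕ) := by
      push_cast [hv0]; ring
    rw [this, ZMod.natCast_val, ZMod.cast_id]; ring
  -- filter is singleton
  have : Finset.filter (fun v : ℤ => (v : ZMod t) = i) (Finset.Ico a (a + (t:ℤ))) = {v0} := by
    ext w
    simp only [Finset.mem_filter, Finset.mem_singleton]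
    constructor
    · rintro ⟨hw, hwres⟩
      exact hinj w hw v0 hv0mem (by rw [hwres, hv0res])
    · rintro rfl; exact ⟨hv0mem, hv0res⟩
  unfold zc ind
  rw [Finset.sum_boole, this]
  simp

lemma zc_L (t : ℕ) (htpos : 0 < t) (L : ℕ) (i : ZMod t) :
    zc t (-(t*L:ℤ)) 0 i = L := by
  induction L with
  | zero => simp [zc]
  | succ L ih =>
      have h1 : (-(t*L:ℤ)) = -(t*(L+1):ℤ) + t := by push_cast; ring
      have h2 : zc t (-(t*(L+1):ℤ)) 0 i
          = zc t (-(t*(L+1):ℤ)) (-(t*L:ℤ)) i + zc t (-(t*L:ℤ)) 0 i := by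
        apply zc_split <;> push_cast <;> nlinarith [htpos]
      have h3 : ((L+1:ℕ):ℤ) = (L:ℤ)+1 := by push_cast; ring
      rw [show ((L+1:ℕ):ℤ) = (L:ℤ)+1 from h3] 
      rw [h2, ih, h1, zc_period t htpos _ i]
      push_cast; ring

lemma two_mul_sum_Ico (n : ℕ) (a : ℤ) :
    2 * (∑ m ∈ Finset.Ico a (a + (n:ℤ)), m) = n * (2*a + n - 1) := by
  induction n with
  | zero => simp
  | succ n ih =>
      have h1 : a + ((n:ℤ)+1) = (a + n) + 1 := by ring
      push_cast
      rw [h1, Ico_succ a (a+n) (by omega), Finset.sum_insert (by simp)]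
      push_cast at ih
      ring_nf
      ring_nf at ih
      linarith [ih]

-- Young diagram basics

def bet (h : YoungDiagram) (j : ℕ) : ℤ := (h.rowLen j : ℤ) - (j + 1)

lemma bet_strictAnti (h : YoungDiagram) : StrictAnti (bet h) := by
  intro j1 j2 hlt
  unfold bet
  have := h.rowLen_anti j1 j2 (le_of_lt hlt)
  omega

lemma rowLen_zero (h : YoungDiagram) {j : ℕ} (hj : h.colLen 0 ≤ j) : h.rowLen j = 0 := by
  by_contra hne
  have hpos : 0 < h.rowLen j := Nat.pos_of_ne_zero hne
  have : (j, 0) ∈ h := YoungDiagram.mem_iff_lt_rowLen.2 hpos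
  have := YoungDiagram.mem_iff_lt_colLen.1 this
  omega

lemma bet_of_ge (h : YoungDiagram) {j : ℕ} (hj : h.colLen 0 ≤ j) : bet h j = -(j+1:ℤ) := by
  unfold bet; rw [rowLen_zero h hj]; push_cast; ring

lemma cells_decomp (h : YoungDiagram) (J : ℕ) (hJ : h.colLen 0 ≤ J) :
    h.cells = (range J).biUnion
      (fun j => (range (h.rowLen j)).image (fun c => (j, c))) := by
  ext ⟨r, c⟩
  simp only [Finset.mem_biUnion, Finset.mem_image, Finset.mem_range, YoungDiagram.mem_cells]
  constructor
  · intro hm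
    have hr : r < h.colLen 0 := YoungDiagram.mem_iff_lt_colLen.1 (h.up_left_mem (le_refl r) (Nat.zero_le c) hm)
    exact ⟨r, lt_of_lt_of_le hr hJ, c, YoungDiagram.mem_iff_lt_rowLen.1 hm, rfl⟩
  · rintro ⟨j, hj, c', hc', heq⟩
    rw [Prod.mk.injEq] at heq
    obtain ⟨rfl, rfl⟩ := heq
    exact YoungDiagram.mem_iff_lt_rowLen.2 hc'

lemma pd (h : YoungDiagram) (J : ℕ) : (↑(range J) : Set ℕ).PairwiseDisjoint
    (fun j => (range (h.rowLen j)).image (fun c => (j, c))) := by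
  intro x _ y _ hxy
  simp only [Finset.disjoint_left, Finset.mem_image]
  rintro ⟨a, b⟩ ⟨c1, _, h1⟩ ⟨c2, _, h2⟩
  apply hxy
  rw [Prod.mk.injEq] at h1 h2
  omega

lemma card_cells (h : YoungDiagram) (J : ℕ) (hJ : h.colLen 0 ≤ J) :
    h.cells.card = ∑ j ∈ range J, h.rowLen j := by
  rw [cells_decomp h J hJ, Finset.card_biUnion]
  · apply Finset.sum_congr rfl
    intro j _
    rw [Finset.card_image_of_injective _ (fun a b hab => by
      rw [Prod.mk.injEq] at hab; exact hab.2), Finset.card_range]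
  · intro x hx y hy hxy
    exact pd h J hx hy hxy

lemma rCount_decomp (h : YoungDiagram) (t : ℕ) (i : ZMod t) (J : ℕ) (hJ : h.colLen 0 ≤ J) :
    (rCount h t i : ℤ) = ∑ j ∈ range J,
      ((range (h.rowLen j)).filter (fun c : ℕ => ((c : ZMod t) - (j : ZMod t) = i))).card := by
  unfold rCount
  rw [cells_decomp h J hJ, Finset.filter_biUnion, Finset.card_biUnion]
  · push_cast
    apply Finset.sum_congr rfl
    intro j _
    rw [Finset.filter_image]
    rw [Finset.card_image_of_injective _ (fun a b hab => by
      rw [Prod.mk.injEq] at hab; exact hab.2)]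
  · intro x hx y hy hxy
    exact Finset.disjoint_filter_filter (pd h J hx hy hxy)

lemma row_to_zc (h : YoungDiagram) (t : ℕ) (i : ZMod t) (j : ℕ) :
    (((range (h.rowLen j)).filter (fun c : ℕ => ((c : ZMod t) - (j : ZMod t) = i))).card : ℤ)
      = zc t (-(j:ℤ)) (bet h j + 1) i := by
  unfold zc
  rw [← Finset.sum_boole]
  push_cast
  refine Finset.sum_nbij' (i := fun c : ℕ => (c : ℤ) - j) (j := fun v : ℤ => (v + j).toNat) ?_ ?_ ?_ ?_ ?_
  · intro a ha
    simp only [Finset.mem_range] at ha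
    simp only [Finset.mem_Ico, bet]
    omega
  · intro v hv
    simp only [Finset.mem_Ico, bet] at hv
    simp only [Finset.mem_range]
    omega
  · intro a _; omega
  · intro v hv
    simp only [Finset.mem_Ico, bet] at hv
    omega
  · intro a _
    unfold ind
    have : (((a : ℤ) - (j:ℕ) : ℤ) : ZMod t) = (a : ZMod t) - (j : ZMod t) := by push_cast; ring
    rw [this]

lemma InS_iff (h : YoungDiagram) (x : ℤ) : InS h x ↔ ∃ j, bet h j = x := Iff.rfl

lemma InS_of_low (h : YoungDiagram) {x : ℤ} (hx : x ≤ -((h.colLen 0 : ℤ) + 1)) : InS h x := by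
  refine ⟨(-x-1).toNat, ?_⟩
  have h1 : h.colLen 0 ≤ (-x-1).toNat := by omega
  have := bet_of_ge h h1
  unfold bet at this
  omega

lemma InS_le (h : YoungDiagram) {x : ℤ} (hx : InS h x) : x ≤ bet h 0 := by
  obtain ⟨j, hj⟩ := hx
  rcases Nat.eq_zero_or_pos j with rfl | hj0
  · exact le_of_eq hj.symm
  · exact hj ▸ le_of_lt (bet_strictAnti h hj0)

lemma exists_c (t : ℕ) (htpos : 0 < t) (h : YoungDiagram) (hcore : IsTCore t h) (i : ℕ) :
    ∃ ci : ℤ, ∀ m : ℤ, (InS h ((t:ℤ) * m + i) ↔ m < ci) := by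
  set P : ℤ → Prop := fun m => InS h ((t:ℤ) * m + i) with hP
  have hdown : ∀ m : ℤ, P m → P (m - 1) := by
    intro m hm
    have := hcore _ hm
    have he : (t:ℤ) * m + i - t = (t:ℤ) * (m - 1) + i := by ring
    rwa [he] at this
  have hdown' : ∀ m m' : ℤ, m' ≤ m → P m → P m' := by
    intro m m' hle hm
    obtain ⟨d, rfl⟩ : ∃ d : ℕ, m' = m - d := ⟨(m - m').toNat, by omega⟩
    clear hle
    induction d with
    | zero => simpa using hm
    | succ d ih =>
        have : m - ((d:ℤ) + 1) = (m - d) - 1 := by ring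
        push_cast
        rw [this]
        exact hdown _ ih
  have hbdd : ∃ b : ℤ, ∀ z : ℤ, P z → z ≤ b := by
    refine ⟨|bet h 0| + 1, ?_⟩
    intro z hz
    have h1 := InS_le h hz
    by_contra hcon
    push_neg at hcon
    have hz0 : 0 < z := by
      have := abs_nonneg (bet h 0); omega
    have : (z:ℤ) ≤ (t:ℤ) * z + i := by
      have : (1:ℤ) ≤ t := by exact_mod_cast htpos
      nlinarith
    have := le_abs_self (bet h 0)
    omega
  have hinh : ∃ z : ℤ, P z := by
    refine ⟨-((h.colLen 0 : ℤ) + 1 + i), ?_⟩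
    apply InS_of_low
    have ht1 : (1:ℤ) ≤ t := by exact_mod_cast htpos
    nlinarith [Int.natCast_nonneg (h.colLen 0), Int.natCast_nonneg i]
  obtain ⟨g, hg, hub⟩ := Int.exists_greatest_of_bdd hbdd hinh
  refine ⟨g + 1, fun m => ⟨fun hm => by have := hub m hm; omega,
    fun hm => hdown' g m (by omega) hg⟩⟩

section E
variable (t : ℕ) (htpos : 0 < t) (h : YoungDiagram) (c : ℕ → ℤ)
  (hc : ∀ (i : ℕ) (m : ℤ), InS h ((t:ℤ) * m + i) ↔ m < c i)
  (L : ℕ) (hL1 : h.colLen 0 ≤ t * L) (hL2 : ∀ i, i < t → -(L:ℤ) ≤ c i)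

noncomputable def Efin : Finset ℤ := (range t).biUnion
  (fun i => (Finset.Ico (-(L:ℤ)) (c i)).image (fun m => (t:ℤ) * m + i))

include hc hL1 hL2 htpos

lemma mem_E (x : ℤ) : x ∈ Efin t c L ↔ (-(t*L:ℤ) ≤ x ∧ InS h x) := by
  unfold Efin
  simp only [Finset.mem_biUnion, Finset.mem_image, Finset.mem_range, Finset.mem_Ico]
  constructor
  · rintro ⟨i, hi, m, ⟨hm1, hm2⟩, rfl⟩
    constructor
    · push_cast; nlinarith [Int.natCast_nonneg i]
    · exact (hc i m).2 hm2
  · rintro ⟨hx1, hx2⟩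
    refine ⟨(x % t).toNat, ?_, x / t, ⟨?_, ?_⟩, ?_⟩
    · have := Int.emod_lt_of_pos x (by exact_mod_cast htpos : (0:ℤ) < t)
      have := Int.emod_nonneg x (by exact_mod_cast htpos.ne' : (t:ℤ) ≠ 0)
      omega
    · -- -(L) ≤ x / t
      have heq : (t:ℤ) * (x / t) + ((x % t).toNat : ℤ) = x := by
        have := Int.emod_nonneg x (by exact_mod_cast htpos.ne' : (t:ℤ) ≠ 0)
        have := Int.mul_ediv_add_emod x t
        omega
      have hr : ((x % t).toNat : ℤ) < t := by
        have := Int.emod_lt_of_pos x (by exact_mod_cast htpos : (0:ℤ) < t)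
        omega
      by_contra hcon
      push_neg at hcon
      have : (t:ℤ) * (x / t) ≤ (t:ℤ) * (-(L:ℤ) - 1) := by
        apply mul_le_mul_of_nonneg_left (by omega) (by positivity)
      push_cast at hx1
      nlinarith [Int.natCast_nonneg ((x % t).toNat)]
    · -- x / t < c ((x % t).toNat)
      apply (hc ((x % t).toNat) (x / t)).1
      have heq : (t:ℤ) * (x / t) + ((x % t).toNat : ℤ) = x := by
        have := Int.emod_nonneg x (by exact_mod_cast htpos.ne' : (t:ℤ) ≠ 0)
        have := Int.mul_ediv_add_emod x t
        omega
      rwa [heq]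
    · have := Int.emod_nonneg x (by exact_mod_cast htpos.ne' : (t:ℤ) ≠ 0)
      have := Int.mul_ediv_add_emod x t
      omega

lemma image_bet : (range (t*L)).image (bet h) = Efin t c L := by
  ext x
  rw [mem_E t htpos h c hc L hL1 hL2]
  simp only [Finset.mem_image, Finset.mem_range]
  constructor
  · rintro ⟨j, hj, rfl⟩
    constructor
    · unfold bet
      push_cast
      omega
    · exact ⟨j, rfl⟩
  · rintro ⟨hx1, j, hj⟩
    refine ⟨j, ?_, hj⟩
    by_contra hcon
    push_neg at hcon
    have hbet := bet_of_ge h (le_trans hL1 hcon)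
    unfold bet at hbet
    have hj' : ((t:ℤ) * L) ≤ (j:ℤ) := by exact_mod_cast hcon
    omega

lemma sum_bet {M : Type*} [AddCommMonoid M] (f : ℤ → M) :
    ∑ j ∈ range (t*L), f (bet h j) =
      ∑ i ∈ range t, ∑ m ∈ Finset.Ico (-(L:ℤ)) (c i), f ((t:ℤ) * m + i) := by
  classical
  have himg := Finset.sum_image (s := range (t*L)) (g := bet h) (f := f) (fun a _ b _ hab =>
    (bet_strictAnti h).injective hab)
  rw [← himg, image_bet t htpos h c hc L hL1 hL2]
  unfold Efin
  rw [Finset.sum_biUnion]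
  · apply Finset.sum_congr rfl
    intro i _
    rw [Finset.sum_image]
    intro a _ b _ hab
    have : (t:ℤ) * a = t * b := by have hab' : (t:ℤ) * a + i = t * b + i := hab; omega
    have ht0 : (t:ℤ) ≠ 0 := by exact_mod_cast htpos.ne'
    exact mul_left_cancel₀ ht0 this
  · intro x hx y hy hxy
    simp only [Finset.coe_range, Set.mem_Iio] at hx hy
    simp only [Finset.disjoint_left, Finset.mem_image]
    rintro v ⟨m1, _, rfl⟩ ⟨m2, _, heq⟩
    apply hxy
    have hd : (t:ℤ) ∣ ((x:ℤ) - y) := ⟨m2 - m1, by linarith [heq]⟩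
    have hx' : (x:ℤ) < t := by exact_mod_cast hx
    have hy' : (y:ℤ) < t := by exact_mod_cast hy
    have := Int.eq_zero_of_abs_lt_dvd hd (show |(x:ℤ) - y| < t by
      rw [abs_lt]; constructor <;> omega)
    omega

end E

lemma gauss_aux (n : ℕ) : 2 * (∑ j ∈ range n, ((j:ℤ) + 1)) = (n:ℤ) * ((n:ℤ)+1) := by
  induction n with
  | zero => simp
  | succ n ih =>
      rw [Finset.sum_range_succ]
      push_cast
      push_cast at ih
      linarith [ih]

section Core
variable (t : ℕ) (htpos : 0 < t) (h : YoungDiagram) (c : ℕ → ℤ)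
  (hc : ∀ (i : ℕ) (m : ℤ), InS h ((t:ℤ) * m + i) ↔ m < c i)
  (L : ℕ) (hL1 : h.colLen 0 ≤ t * L) (hL2 : ∀ i, i < t → -(L:ℤ) ≤ c i)

include htpos hc hL1 hL2

lemma card_Ico_c (i : ℕ) (hi : i < t) :
    (((Finset.Ico (-(L:ℤ)) (c i)).card : ℕ) : ℤ) = c i + L := by
  rw [Int.card_Ico]
  have := hL2 i hi
  omega

lemma sum_c_zero : ∑ i ∈ range t, c i = 0 := by
  have hs := sum_bet t htpos h c hc L hL1 hL2 (fun _ => (1:ℤ))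
  simp only [Finset.sum_const, nsmul_eq_mul, mul_one, Finset.card_range] at hs
  have hr : ∑ i ∈ range t, ((Finset.Ico (-(L:ℤ)) (c i)).card : ℤ)
      = ∑ i ∈ range t, (c i + L) := by
    apply Finset.sum_congr rfl
    intro i hi
    exact card_Ico_c t htpos h c hc L hL1 hL2 i (Finset.mem_range.1 hi)
  rw [hr, Finset.sum_add_distrib, Finset.sum_const, Finset.card_range] at hs
  simp only [nsmul_eq_mul] at hs
  push_cast at hs ⊢
  linarith [hs]

lemma count_bet (i0 : ℕ) (hi0 : i0 < t) :
    ∑ j ∈ range (t*L), ind t (i0 : ZMod t) (bet h j) = c i0 + L := by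
  rw [sum_bet t htpos h c hc L hL1 hL2 (fun x => ind t (i0 : ZMod t) x)]
  have hinner : ∀ i ∈ range t, ∑ m ∈ Finset.Ico (-(L:ℤ)) (c i),
      ind t (i0 : ZMod t) ((t:ℤ) * m + i)
      = if i = i0 then c i + L else 0 := by
    intro i hi
    have hival : ∀ m : ℤ, (((t:ℤ) * m + i : ℤ) : ZMod t) = (i : ZMod t) := by
      intro m; push_cast; simp [ZMod.natCast_self]
    have hcast : ((i : ZMod t) = (i0 : ZMod t)) ↔ i = i0 := by
      rw [ZMod.natCast_eq_natCast_iff]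
      unfold Nat.ModEq
      rw [Nat.mod_eq_of_lt (Finset.mem_range.1 hi), Nat.mod_eq_of_lt hi0]
    unfold ind
    simp only [hival, hcast]
    by_cases hii : i = i0
    · simp only [hii, if_true]
      rw [Finset.sum_const, nsmul_eq_mul, mul_one,
        card_Ico_c t htpos h c hc L hL1 hL2 i0 hi0]
    · simp [hii]
  rw [Finset.sum_congr rfl hinner, Finset.sum_ite_eq' (range t) i0 (fun i => c i + L)]
  simp [Finset.mem_range.2 hi0]

lemma count_neg (i0 : ZMod t) :
    ∑ j ∈ range (t*L), ind t i0 (-(j:ℤ)-1) = L := by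
  have : ∑ j ∈ range (t*L), ind t i0 (-(j:ℤ)-1)
      = ∑ v ∈ Finset.Ico (-(t*L:ℤ)) 0, ind t i0 v := by
    refine Finset.sum_nbij' (i := fun j : ℕ => -(j:ℤ)-1) (j := fun v : ℤ => (-v-1).toNat)
      ?_ ?_ ?_ ?_ ?_
    · intro a ha
      simp only [Finset.mem_range] at ha
      simp only [Finset.mem_Ico]
      have : ((a:ℤ)) < (t*L:ℕ) := by exact_mod_cast ha
      push_cast at this ⊢
      omega
    · intro v hv
      simp only [Finset.mem_Ico] at hv
      simp only [Finset.mem_range]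
      have : (-v-1) < (t*L:ℕ) := by push_cast at hv ⊢; omega
      omega
    · intro a _; omega
    · intro v hv
      simp only [Finset.mem_Ico] at hv
      omega
    · intro a _; rfl
  rw [this]
  have := zc_L t htpos L i0
  unfold zc at this
  push_cast at this ⊢
  convert this using 2

lemma nvec_eq_c (i0 : ℕ) (hi0 : i0 < t) :
    (rCount h t (i0 : ZMod t) : ℤ) - (rCount h t ((i0 + 1 : ℕ) : ZMod t) : ℤ) = c i0 := by
  have hcast : ((i0 + 1 : ℕ) : ZMod t) = (i0 : ZMod t) + 1 := by push_cast; ring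
  rw [hcast, rCount_decomp h t (i0 : ZMod t) (t*L) hL1,
    rCount_decomp h t ((i0 : ZMod t) + 1) (t*L) hL1]
  push_cast
  rw [← Finset.sum_sub_distrib]
  have hrow : ∀ j ∈ range (t*L),
      ((((range (h.rowLen j)).filter (fun c : ℕ => ((c : ZMod t) - (j : ZMod t) = (i0 : ZMod t)))).card : ℤ)
      - (((range (h.rowLen j)).filter (fun c : ℕ => ((c : ZMod t) - (j : ZMod t) = (i0 : ZMod t) + 1))).card : ℤ))
      = ind t (i0 : ZMod t) (bet h j) - ind t (i0 : ZMod t) (-(j:ℤ)-1) := by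
    intro j _
    rw [row_to_zc h t (i0 : ZMod t) j, row_to_zc h t ((i0 : ZMod t) + 1) j]
    have hab : (-(j:ℤ)) ≤ bet h j + 1 := by
      unfold bet; push_cast; omega
    have := zc_diff' t (-(j:ℤ)) (bet h j + 1) (i0 : ZMod t) hab
    rw [this]
    have hbj : bet h j + 1 - 1 = bet h j := by ring
    rw [hbj]
  rw [Finset.sum_congr rfl hrow, Finset.sum_sub_distrib,
    count_bet t htpos h c hc L hL1 hL2 i0 hi0, count_neg t htpos h c hc L hL1 hL2]
  ring

lemma two_mul_card (hczero : ∑ i ∈ range t, c i = 0) :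
    2 * (h.cells.card : ℤ) = (t:ℤ) * (∑ i ∈ range t, (c i)^2)
      + 2 * (∑ i ∈ range t, (i:ℤ) * c i) := by
  have hcard := card_cells h (t*L) hL1
  have hcardz : (h.cells.card : ℤ) = ∑ j ∈ range (t*L), ((h.rowLen j : ℤ)) := by
    rw [hcard]; push_cast; rfl
  have hbb : ∀ j ∈ range (t*L), (h.rowLen j : ℤ) = bet h j + ((j:ℤ) + 1) := by
    intro j _; unfold bet; ring
  rw [hcardz, Finset.sum_congr rfl hbb, Finset.sum_add_distrib]
  have hgauss2 : 2 * (∑ j ∈ range (t*L), ((j:ℤ) + 1)) = (t*L : ℤ) * ((t*L:ℤ) + 1) := by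
    have := gauss_aux (t*L)
    push_cast at this ⊢
    linarith [this]
  have hsum_bet : ∑ j ∈ range (t*L), bet h j
      = ∑ i ∈ range t, ∑ m ∈ Finset.Ico (-(L:ℤ)) (c i), ((t:ℤ) * m + i) :=
    sum_bet t htpos h c hc L hL1 hL2 (fun x => x) |>.trans (by
      apply Finset.sum_congr rfl; intros; rfl)
  rw [hsum_bet]
  have hinner : ∀ i ∈ range t, (2:ℤ) * ∑ m ∈ Finset.Ico (-(L:ℤ)) (c i), ((t:ℤ) * m + i)
      = (t:ℤ)*((c i)^2 - c i - (L:ℤ)^2 - L) + 2*(i:ℤ)*(c i + L) := by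
    intro i hi
    have hle := hL2 i (Finset.mem_range.1 hi)
    have hsplit : ∑ m ∈ Finset.Ico (-(L:ℤ)) (c i), ((t:ℤ) * m + i)
        = (t:ℤ) * (∑ m ∈ Finset.Ico (-(L:ℤ)) (c i), m)
          + (i:ℤ) * (((Finset.Ico (-(L:ℤ)) (c i)).card : ℕ) : ℤ) := by
      rw [Finset.sum_add_distrib, Finset.mul_sum, Finset.sum_const]
      simp only [nsmul_eq_mul]
      ring
    have hcr := card_Ico_c t htpos h c hc L hL1 hL2 i (Finset.mem_range.1 hi)
    have hci : c i = -(L:ℤ) + ((c i + L).toNat : ℤ) := by omega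
    have hgsum := two_mul_sum_Ico ((c i + L).toNat) (-(L:ℤ))
    rw [← hci] at hgsum
    have htn : (((c i + L).toNat : ℕ) : ℤ) = c i + L := by omega
    rw [htn] at hgsum
    rw [hsplit, hcr]
    nlinarith [hgsum]
  have hmain : (2:ℤ) * (∑ i ∈ range t, ∑ m ∈ Finset.Ico (-(L:ℤ)) (c i), ((t:ℤ)*m+(i:ℤ)))
      = ∑ i ∈ range t, ((t:ℤ)*((c i)^2 - c i - (L:ℤ)^2 - L) + 2*(i:ℤ)*(c i + L)) := by
    rw [Finset.mul_sum]
    exact Finset.sum_congr rfl hinner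
  have hexp : ∑ i ∈ range t, ((t:ℤ)*((c i)^2 - c i - (L:ℤ)^2 - L) + 2*(i:ℤ)*(c i + L))
      = (t:ℤ) * (∑ i ∈ range t, (c i)^2) - (t:ℤ) * (∑ i ∈ range t, c i)
        + 2 * (∑ i ∈ range t, (i:ℤ) * c i) + 2 * (L:ℤ) * (∑ i ∈ range t, (i:ℤ))
        - (t:ℤ) * ((t:ℤ) * ((L:ℤ)^2 + (L:ℤ))) := by
    have hpt : ∀ i ∈ range t, (t:ℤ)*((c i)^2 - c i - (L:ℤ)^2 - L) + 2*(i:ℤ)*(c i + L)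
        = ((((t:ℤ)*(c i)^2 - (t:ℤ)*(c i)) + 2*((i:ℤ)*(c i))) + 2*(L:ℤ)*(i:ℤ))
          + (-((t:ℤ)*((L:ℤ)^2+(L:ℤ)))) := by
      intro i _; ring
    rw [Finset.sum_congr rfl hpt, Finset.sum_add_distrib, Finset.sum_add_distrib,
      Finset.sum_add_distrib, Finset.sum_sub_distrib, Finset.sum_const, Finset.card_range,
      ← Finset.mul_sum, ← Finset.mul_sum, ← Finset.mul_sum, ← Finset.mul_sum]
    simp only [nsmul_eq_mul]
    push_cast
    ring
  have hSi : 2 * (∑ i ∈ range t, (i:ℤ)) = (t:ℤ) * ((t:ℤ) - 1) := by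
    have hg := gauss_aux t
    have : (∑ i ∈ range t, ((i:ℤ) + 1)) = (∑ i ∈ range t, (i:ℤ)) + t := by
      rw [Finset.sum_add_distrib, Finset.sum_const, Finset.card_range]
      simp [nsmul_eq_mul]
    rw [this] at hg
    linarith [hg]
  rw [hexp] at hmain
  push_cast at hgauss2
  linear_combination hmain + hgauss2 - (t:ℤ) * hczero + (L:ℤ) * hSi

end Core


lemma rcounts_of_gbg (t : ℕ) (ht : t.Prime) (k : ℤ) (j : ℕ) (hj1 : 1 ≤ j) (hj2 : j ≤ t - 1)
    (μ : YoungDiagram)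
    (hgbg : GBG μ t = (k : ℂ) * Complex.exp (2 * (Real.pi : ℂ) * Complex.I * (j : ℂ) / (t : ℂ))) :
    ∃ a : ℤ, ∀ i : ℕ, i < t →
      (rCount μ t (i : ZMod t) : ℤ) = a + (if i = j then k else 0) := by
  have ht2 : 2 ≤ t := ht.two_le
  have hjt : j < t := by omega
  set ω : ℂ := Complex.exp (2 * (Real.pi : ℂ) * Complex.I / (t : ℂ)) with hω
  have hprim : IsPrimitiveRoot ω t := Complex.isPrimitiveRoot_exp t (by omega)
  have hexp : ∀ i : ℕ, Complex.exp (2 * (Real.pi : ℂ) * Complex.I * (i : ℂ) / (t : ℂ)) = ω ^ i := by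
    intro i
    rw [hω, ← Complex.exp_nat_mul]
    congr 1
    ring
  have hsum : ∑ i ∈ range t, (rCount μ t (i : ZMod t) : ℂ) * ω ^ i = (k:ℂ) * ω ^ j := by
    rw [← hexp j, ← hgbg]
    unfold GBG
    exact Finset.sum_congr rfl (fun i _ => by rw [hexp i])
  set A : ℕ → ℤ := fun i => (rCount μ t (i : ZMod t) : ℤ) - (if i = j then k else 0) with hA
  have hAsum : ∑ i ∈ range t, (A i : ℂ) * ω ^ i = 0 := by
    have hsplit : ∀ i ∈ range t, (A i : ℂ) * ω ^ i
        = (rCount μ t (i : ZMod t) : ℂ) * ω ^ i - (if i = j then (k:ℂ) * ω ^ j else 0) := by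
      intro i _
      rw [hA]
      push_cast
      by_cases hij : i = j
      · subst hij; simp; ring
      · simp [hij]
    rw [Finset.sum_congr rfl hsplit, Finset.sum_sub_distrib, hsum,
      Finset.sum_ite_eq' (range t) j (fun _ => (k:ℂ) * ω ^ j)]
    simp [Finset.mem_range.2 hjt]
  set B : ℕ → ℤ := fun i => A i - A (t-1) with hB
  have hBsum : ∑ i ∈ range t, (B i : ℂ) * ω ^ i = 0 := by
    have hsplit : ∀ i ∈ range t, (B i : ℂ) * ω ^ i
        = (A i : ℂ) * ω ^ i - (A (t-1) : ℤ) * ω ^ i := by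
      intro i _; rw [hB]; push_cast; ring
    rw [Finset.sum_congr rfl hsplit, Finset.sum_sub_distrib, hAsum, ← Finset.mul_sum,
      hprim.geom_sum_eq_zero (by omega)]
    simp
  have hBt1 : B (t-1) = 0 := by rw [hB]; simp
  have hBsum' : ∑ i ∈ range (t-1), (B i : ℂ) * ω ^ i = 0 := by
    have hrange : range t = range (t - 1 + 1) := by congr 1; omega
    rw [hrange, Finset.sum_range_succ, hBt1] at hBsum
    simpa using hBsum
  set P : Polynomial ℚ := ∑ i ∈ range (t-1), Polynomial.C ((B i : ℚ)) * Polynomial.X ^ i with hP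
  have haeval : Polynomial.aeval ω P = 0 := by
    rw [hP]
    rw [map_sum]
    have : ∀ i ∈ range (t-1), Polynomial.aeval ω (Polynomial.C ((B i : ℚ)) * Polynomial.X ^ i)
        = (B i : ℂ) * ω ^ i := by
      intro i _
      rw [map_mul, map_pow, Polynomial.aeval_C, Polynomial.aeval_X]
      norm_cast
    rw [Finset.sum_congr rfl this, hBsum']
  have hPzero : P = 0 := by
    by_contra hne
    have hdvd := minpoly.dvd ℚ ω haeval
    rw [← Polynomial.cyclotomic_eq_minpoly_rat hprim (by omega)] at hdvd
    have hdeg1 := Polynomial.natDegree_le_of_dvd hdvd hne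
    rw [Polynomial.natDegree_cyclotomic, Nat.totient_prime ht] at hdeg1
    have hdeg2 : P.natDegree ≤ t - 2 := by
      rw [hP]
      apply Polynomial.natDegree_sum_le_of_forall_le
      intro i hi
      calc (Polynomial.C ((B i : ℚ)) * Polynomial.X ^ i).natDegree
          ≤ (Polynomial.X ^ i : Polynomial ℚ).natDegree := Polynomial.natDegree_C_mul_le _ _
        _ ≤ i := by rw [Polynomial.natDegree_X_pow]
        _ ≤ t - 2 := by have := Finset.mem_range.1 hi; omega
    omega
  have hBzero : ∀ i : ℕ, i < t - 1 → B i = 0 := by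
    intro i hi
    have hco : P.coeff i = (B i : ℚ) := by
      rw [hP, Polynomial.finset_sum_coeff]
      have : ∀ i' ∈ range (t-1), (Polynomial.C ((B i' : ℚ)) * Polynomial.X ^ i').coeff i
          = if i' = i then (B i' : ℚ) else 0 := by
        intro i' _
        rw [Polynomial.coeff_C_mul, Polynomial.coeff_X_pow]
        by_cases hii : i' = i
        · subst hii; simp
        · simp [hii, Ne.symm hii]
      rw [Finset.sum_congr rfl this, Finset.sum_ite_eq' (range (t-1)) i (fun i' => (B i' : ℚ))]
      simp [Finset.mem_range.2 hi]
    rw [hPzero] at hco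
    simp at hco
    exact_mod_cast hco.symm
  refine ⟨A (t-1), fun i hi => ?_⟩
  have hAi : A i = A (t-1) := by
    rcases Nat.lt_or_ge i (t-1) with hlt | hge
    · have h2 : A i - A (t-1) = 0 := hBzero i hlt
      omega
    · have : i = t - 1 := by omega
      rw [this]
  have hAi' : (rCount μ t (i : ZMod t) : ℤ) - (if i = j then k else 0) = A (t-1) := hAi
  by_cases hij : i = j
  · simp only [hij, if_true] at hAi' ⊢
    omega
  · simp only [hij, if_false] at hAi' ⊢
    omega


end TCA

/-- for odd prime t, 1 ≤ j ≤ t-1, and n_i = -k·δ_{i,j-1} + k·δ_{i,j},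
(t/2)·n⃗·n⃗ + b⃗_t·n⃗ = tk² + k; consequently a partition with GBG-rank mod t equal to
k·ω_t^j has t-core of size tk² + k. -/
theorem tcore_size_of_gbg_mul_root (t : ℕ) (ht : t.Prime) (htodd : Odd t) (k : ℤ)
    (j : ℕ) (hj1 : 1 ≤ j) (hj2 : j ≤ t - 1) :
    ((t : ℚ) / 2 * (∑ i ∈ Finset.range t,
        (((-k * (if i = j - 1 then 1 else 0) + k * (if i = j then 1 else 0) : ℤ) : ℚ)) ^ 2) +
      (∑ i ∈ Finset.range t,
        (i : ℚ) * ((-k * (if i = j - 1 then 1 else 0) + k * (if i = j then 1 else 0) : ℤ) : ℚ)) =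
      (t : ℚ) * (k : ℚ) ^ 2 + (k : ℚ)) ∧
    (∀ μ h : YoungDiagram,
      GBG μ t = (k : ℂ) * Complex.exp (2 * (Real.pi : ℂ) * Complex.I * (j : ℂ) / (t : ℂ)) →
      TCoreOf t μ h → (h.cells.card : ℤ) = t * k ^ 2 + k) := by
  have ht2 : 2 ≤ t := ht.two_le
  have htpos : 0 < t := by omega
  have hjt : j < t := by omega
  have hj1t : j - 1 < t := by omega
  have hjj : j - 1 ≠ j := by omega
  constructor
  · -- Part 1
    have hsq : ∀ i ∈ Finset.range t,
        (((-k * (if i = j - 1 then 1 else 0) + k * (if i = j then 1 else 0) : ℤ) : ℚ)) ^ 2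
        = (if i = j then (k:ℚ)^2 else 0) + (if i = j - 1 then (k:ℚ)^2 else 0) := by
      intro i _
      split_ifs <;> first | (exfalso; omega) | (push_cast; ring1)
    have hlin : ∀ i ∈ Finset.range t,
        (i : ℚ) * ((-k * (if i = j - 1 then 1 else 0) + k * (if i = j then 1 else 0) : ℤ) : ℚ)
        = (if i = j then (j:ℚ) * (k:ℚ) else 0) + (if i = j - 1 then -((j:ℚ)-1) * (k:ℚ) else 0) := by
      intro i _
      have hcast : ((j - 1 : ℕ) : ℚ) = (j:ℚ) - 1 := by
        push_cast [Nat.cast_sub hj1]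
        ring
      split_ifs <;>
        first
          | (exfalso; omega)
          | (subst_vars; rw [hcast]; push_cast; ring1)
          | (subst_vars; push_cast; ring1)
          | (push_cast; ring1)
    rw [Finset.sum_congr rfl hsq, Finset.sum_congr rfl hlin,
      Finset.sum_add_distrib, Finset.sum_add_distrib,
      Finset.sum_ite_eq' (Finset.range t) j (fun _ => (k:ℚ)^2),
      Finset.sum_ite_eq' (Finset.range t) (j-1) (fun _ => (k:ℚ)^2),
      Finset.sum_ite_eq' (Finset.range t) j (fun _ => (j:ℚ) * (k:ℚ)),
      Finset.sum_ite_eq' (Finset.range t) (j-1) (fun _ => -((j:ℚ)-1) * (k:ℚ))]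
    simp only [Finset.mem_range.2 hjt, Finset.mem_range.2 hj1t, if_true]
    have htne : (t:ℚ) ≠ 0 := by positivity
    field_simp
    ring
  · -- Part 2
    intro μ h hgbg htc
    obtain ⟨hcore, hnv⟩ := htc
    obtain ⟨a, ha⟩ := TCA.rcounts_of_gbg t ht k j hj1 hj2 μ hgbg
    choose c hc using fun i => TCA.exists_c t htpos h hcore i
    set L : ℕ := h.colLen 0 + (∑ i ∈ Finset.range t, (-(c i)).toNat) + 1 with hL
    have hL1 : h.colLen 0 ≤ t * L := by
      have : L ≤ t * L := Nat.le_mul_of_pos_left L htpos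
      omega
    have hL2 : ∀ i, i < t → -(L:ℤ) ≤ c i := by
      intro i hi
      have hs : (-(c i)).toNat ≤ ∑ i' ∈ Finset.range t, (-(c i')).toNat :=
        Finset.single_le_sum (f := fun i' => (-(c i')).toNat)
          (fun _ _ => Nat.zero_le _) (Finset.mem_range.2 hi)
      have hsL : (-(c i)).toNat ≤ L := by omega
      have : (((-(c i)).toNat : ℕ) : ℤ) ≤ (L:ℤ) := by exact_mod_cast hsL
      omega
    -- nVec μ values
    have hnvmu : ∀ i, i < t → nVec μ t i
        = (if i = j then k else 0) - (if i = j - 1 then k else 0) := by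
      intro i hi
      unfold nVec
      rcases Nat.lt_or_ge i (t-1) with hlt | hge
      · rw [ha i hi, ha (i+1) (by omega)]
        split_ifs <;> omega
      · have hi1 : i + 1 = t := by omega
        have hcast : ((i + 1 : ℕ) : ZMod t) = ((0 : ℕ) : ZMod t) := by
          rw [hi1]
          simp [ZMod.natCast_self]
        rw [hcast, ha i hi, ha 0 (by omega)]
        split_ifs <;> omega
    -- c values
    have hcval : ∀ i, i < t → c i = (if i = j then k else 0) - (if i = j - 1 then k else 0) := by
      intro i hi
      have h1 : nVec h t i = c i := TCA.nvec_eq_c t htpos h c hc L hL1 hL2 i hi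
      rw [← h1, hnv i hi, hnvmu i hi]
    have hczero := TCA.sum_c_zero t htpos h c hc L hL1 hL2
    have hkey := TCA.two_mul_card t htpos h c hc L hL1 hL2 hczero
    -- compute the two sums
    have hS2 : ∑ i ∈ Finset.range t, (c i)^2 = 2 * k^2 := by
      have hpt : ∀ i ∈ Finset.range t, (c i)^2
          = (if i = j then k^2 else 0) + (if i = j - 1 then k^2 else 0) := by
        intro i hi
        rw [hcval i (Finset.mem_range.1 hi)]
        split_ifs <;> first | (exfalso; omega) | ring1
      rw [Finset.sum_congr rfl hpt, Finset.sum_add_distrib,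
        Finset.sum_ite_eq' (Finset.range t) j (fun _ => k^2),
        Finset.sum_ite_eq' (Finset.range t) (j-1) (fun _ => k^2)]
      simp only [Finset.mem_range.2 hjt, Finset.mem_range.2 hj1t, if_true]
      ring
    have hS1 : ∑ i ∈ Finset.range t, (i:ℤ) * c i = k := by
      have hpt : ∀ i ∈ Finset.range t, (i:ℤ) * c i
          = (if i = j then (j:ℤ) * k else 0) + (if i = j - 1 then -((j:ℤ)-1) * k else 0) := by
        intro i hi
        rw [hcval i (Finset.mem_range.1 hi)]
        have hcast : ((j - 1 : ℕ) : ℤ) = (j:ℤ) - 1 := by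
          push_cast [Nat.cast_sub hj1]
          ring
        split_ifs <;>
          first
            | (exfalso; omega)
            | (subst_vars; rw [hcast]; push_cast; ring1)
            | (subst_vars; push_cast; ring1)
            | (push_cast; ring1)
      rw [Finset.sum_congr rfl hpt, Finset.sum_add_distrib,
        Finset.sum_ite_eq' (Finset.range t) j (fun _ => (j:ℤ) * k),
        Finset.sum_ite_eq' (Finset.range t) (j-1) (fun _ => -((j:ℤ)-1) * k)]
      simp only [Finset.mem_range.2 hjt, Finset.mem_range.2 hj1t, if_true]
      ring
    rw [hS2, hS1] at hkey
    linarith [hkey]
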